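/- Transfinite induction implies jump-lifted transfinite induction, semantically over the ordinals: for any predicate A on ordinals, define the Gentzen jump A⁺(θ) := ∀ξ, (∀η < ξ, A η) → (∀η < ξ + ω^θ, A η). If A is progressive (∀θ, (∀ζ < θ, A ζ) → A θ), then A⁺ is progressive. -/

import Mathlib

open Ordinal

def Prog (B : Ordinal → Prop) : Prop := ∀ θ, (∀ ζ < θ, B ζ) → B θ

def Jump (A : Ordinal → Prop) (θ : Ordinal) : Prop :=
  ∀ ξ, (∀ η < ξ, A η) → ∀ η < ξ + omega0 ^ θ, A η

theorem prog_jump (A : Ordinal → Prop) (h : Prog A) : Prog (Jump A) := by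
  intro θ ih ξ hξ η hη
  rcases Ordinal.zero_or_succ_or_isSuccLimit θ with rfl | ⟨δ, rfl⟩ | hl
  · rw [opow_zero] at hη
    rcases lt_or_eq_of_le (Order.lt_add_one_iff.mp hη) with h' | rfl
    · exact hξ η h'
    · exact h η hξ
  · rw [opow_succ] at hη
    obtain ⟨c, hc, hη⟩ := (Ordinal.lt_add_iff_of_isSuccLimit
      (Ordinal.isSuccLimit_mul_right (opow_pos δ omega0_pos) isSuccLimit_omega0)).mp hη
    obtain ⟨c', hc', hcc'⟩ := (Ordinal.lt_mul_iff_of_isSuccLimit isSuccLimit_omega0).mp hc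
    obtain ⟨n, rfl⟩ := Ordinal.lt_omega0.mp hc'
    replace hη : η < ξ + omega0 ^ δ * n := hη.trans (add_lt_add_right hcc' ξ)
    have key : ∀ n : ℕ, ∀ η < ξ + omega0 ^ δ * n, A η := by
      intro n
      induction n with
      | zero => simpa using hξ
      | succ k ihk =>
          intro η hη
          have : η < (ξ + omega0 ^ δ * k) + omega0 ^ δ := by
            rwa [Nat.cast_add, Nat.cast_one, mul_add, mul_one, ← add_assoc] at hη
          exact ih δ (Order.lt_succ δ) _ ihk η this
    exact key n η hη
  · obtain ⟨c, hc, hη⟩ := (Ordinal.lt_add_iff_of_isSuccLimit (Ordinal.isSuccLimit_opow_left isSuccLimit_omega0 hl.pos.ne')).mp hη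
    obtain ⟨d, hd, hcd⟩ := (Ordinal.lt_opow_of_isSuccLimit omega0_ne_zero hl).mp hc
    exact ih d hd ξ hξ η (hη.trans (by exact add_lt_add_right hcd ξ))
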